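/- Let X be an Oppermann–Thomas cluster tilting object of 𝒯. Then X is d-self-perpendicular, i.e. add X = { Y ∈ 𝒯 : Ext^d_𝒯(X,Y) = 0 }. -/
import Mathlib


/-!
Common setting (Setup 0.8 of the paper): `k` is an algebraically closed field,
`𝒯` a `k`-linear, Hom-finite, `(d+2)`-angulated category with split idempotents,
`d`-suspension functor `Σ^d` (denoted `S` below, an auto-equivalence), which is
`2d`-Calabi–Yau.  We write `Ext^d_𝒯(X,Y) = 𝒯(X, Σ^d Y)`.
-/

open CategoryTheory Limits

universe v u

namespace MaxTauRigid

variable {𝒯 : Type u} [Category.{v} 𝒯]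

section Additive

variable [Preadditive 𝒯] [HasFiniteBiproducts 𝒯]

instance : HasBinaryBiproducts 𝒯 := hasBinaryBiproducts_of_finite_biproducts 𝒯

/-- `Y ∈ add X`: `Y` is a direct summand of a finite direct sum of copies of `X`. -/
def inAdd (X Y : 𝒯) : Prop :=
  ∃ (n : ℕ) (ι : Y ⟶ ⨁ fun _ : Fin n => X) (π : (⨁ fun _ : Fin n => X) ⟶ Y), ι ≫ π = 𝟙 Y

/-- `X` is indecomposable: it is non-zero, and in any direct sum decomposition of `X`
one of the two summands is zero. -/
def IsIndec (X : 𝒯) : Prop :=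
  ¬ IsZero X ∧ ∀ Y Z : 𝒯, Nonempty (X ≅ Y ⊞ Z) → IsZero Y ∨ IsZero Z

/-- `X` has no non-zero direct summand lying in `add C`. -/
def noSummandIn (C X : 𝒯) : Prop :=
  ∀ Z : 𝒯, inAdd C Z → (∃ (i : Z ⟶ X) (p : X ⟶ Z), i ≫ p = 𝟙 Z) → IsZero Z

variable (S : 𝒯 ≌ 𝒯)

/-- `Ext^d_𝒯(X, Y) = 0`, where `S` is the `d`-suspension functor `Σ^d`;
recall `Ext^d_𝒯(X,Y) = 𝒯(X, Σ^d Y)`. -/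
def extVanish (X Y : 𝒯) : Prop := ∀ f : X ⟶ S.functor.obj Y, f = 0

/-- `X` is `d`-rigid: `Ext^d_𝒯(X,X) = 0`. -/
def IsRigid (X : 𝒯) : Prop := extVanish S X X

/-- `X` is `d`-self-perpendicular: `add X = { Y | Ext^d_𝒯(X,Y) = 0 }` (Definition 0.2). -/
def IsSelfPerp (X : 𝒯) : Prop := ∀ Y : 𝒯, inAdd X Y ↔ extVanish S X Y

/-- `X` is maximal `d`-rigid: `add X = { Y | Ext^d_𝒯(X ⊕ Y, X ⊕ Y) = 0 }` (Definition 0.3). -/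
def IsMaxRigid (X : 𝒯) : Prop := ∀ Y : 𝒯, inAdd X Y ↔ extVanish S (X ⊞ Y) (X ⊞ Y)

end Additive

section Angulated

variable (𝒯) [Preadditive 𝒯] (S : 𝒯 ≌ 𝒯) (d : ℕ)

/-- A candidate `(d+2)`-angle `X₀ → X₁ → ⋯ → X_{d+1} → Σ^d X₀` in `𝒯`:
a chain of `d+1` composable arrows together with a "wrapping" morphism from the last
object to the `d`-suspension of the first one. -/
structure Angle where
  chain : ComposableArrows 𝒯 (d + 1)
  wrap : chain.obj' (d + 1) ⟶ S.functor.obj (chain.obj' 0)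

/-- A `(d+2)`-angulation of `𝒯` (in the sense of Geiss–Keller–Oppermann):
the class of distinguished `(d+2)`-angles, together with the axioms used in the paper:
every morphism extends to a distinguished `(d+2)`-angle, consecutive morphisms in a
distinguished `(d+2)`-angle compose to zero, and distinguished `(d+2)`-angles induce
exact sequences under covariant Hom functors (\[GKO, prop. 2.5(a)]). -/
structure Angulation where
  dist : Set (Angle 𝒯 S d)
  complete : ∀ ⦃X Y : 𝒯⦄ (f : X ⟶ Y), ∃ A ∈ dist,
    ∃ (eX : A.chain.obj' 0 ≅ X) (eY : A.chain.obj' 1 ≅ Y),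
      A.chain.map' 0 1 ≫ eY.hom = eX.hom ≫ f
  comp_zero : ∀ A ∈ dist, ∀ i : ℕ, ∀ _ : i + 2 ≤ d + 1, A.chain.map' i (i + 2) = 0
  comp_zero_last : ∀ A ∈ dist, A.chain.map' d (d + 1) ≫ A.wrap = 0
  comp_zero_wrap : ∀ A ∈ dist, A.wrap ≫ S.functor.map (A.chain.map' 0 1) = 0
  exact_mid : ∀ A ∈ dist, ∀ (W : 𝒯) (i : ℕ), ∀ _ : 1 ≤ i, ∀ _ : i ≤ d,
    ∀ g : W ⟶ A.chain.obj' i, g ≫ A.chain.map' i (i + 1) = 0 →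
      ∃ h : W ⟶ A.chain.obj' (i - 1), h ≫ A.chain.map' (i - 1) i = g
  exact_last : ∀ A ∈ dist, ∀ (W : 𝒯) (g : W ⟶ A.chain.obj' (d + 1)), g ≫ A.wrap = 0 →
    ∃ h : W ⟶ A.chain.obj' d, h ≫ A.chain.map' d (d + 1) = g
  exact_wrap : ∀ A ∈ dist, ∀ (W : 𝒯) (g : W ⟶ S.functor.obj (A.chain.obj' 0)),
    g ≫ S.functor.map (A.chain.map' 0 1) = 0 →
      ∃ h : W ⟶ A.chain.obj' (d + 1), h ≫ A.wrap = g

variable {𝒯 S d}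

/-- `X` is an Oppermann–Thomas cluster tilting object (Definition 0.1): `X` is `d`-rigid
and every `Y ∈ 𝒯` admits a distinguished `(d+2)`-angle
`X_d → ⋯ → X_0 → Y → Σ^d X_d` with all `X_i ∈ add X`. -/
def IsClusterTilting [HasFiniteBiproducts 𝒯] (ang : Angulation 𝒯 S d) (X : 𝒯) : Prop :=
  IsRigid S X ∧ ∀ Y : 𝒯, ∃ A ∈ ang.dist, Nonempty (A.chain.obj' (d + 1) ≅ Y) ∧
    ∀ i : ℕ, ∀ _ : i ≤ d, inAdd X (A.chain.obj' i (by omega))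

end Angulated

section CY

variable (k : Type v) [Field k] (𝒯) [Preadditive 𝒯] [Linear k 𝒯] (S : 𝒯 ≌ 𝒯)

/-- The `2d`-Calabi–Yau property of `𝒯` (where `S = Σ^d`, so `Σ^{2d} = S ∘ S`):
a family of `k`-linear isomorphisms `𝒯(X,Y) ≅ D 𝒯(Y, Σ^{2d} X)`, natural in both
variables, where `D = Hom_k(-,k)` is the `k`-linear duality. -/
structure CalabiYau where
  equiv : ∀ X Y : 𝒯, (X ⟶ Y) ≃ₗ[k] Module.Dual k (Y ⟶ S.functor.obj (S.functor.obj X))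
  natLeft : ∀ {X X' Y : 𝒯} (f : X' ⟶ X) (h : X ⟶ Y) (g : Y ⟶ S.functor.obj (S.functor.obj X')),
    equiv X' Y (f ≫ h) g = equiv X Y h (g ≫ S.functor.map (S.functor.map f))
  natRight : ∀ {X Y Y' : 𝒯} (h : X ⟶ Y) (g' : Y ⟶ Y') (g : Y' ⟶ S.functor.obj (S.functor.obj X)),
    equiv X Y' (h ≫ g') g = equiv X Y h (g' ≫ g)

end CY

end MaxTauRigid


section Aux
open CategoryTheory Limits MaxTauRigid

variable {𝒯 : Type u} [Category.{v} 𝒯] [Preadditive 𝒯] [HasFiniteBiproducts 𝒯]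

lemma aux_extVanish_of_inAdd (S : 𝒯 ≌ 𝒯) [S.functor.Additive] {X Y : 𝒯}
    (hr : IsRigid S X) (h : inAdd X Y) : extVanish S X Y := by
  obtain ⟨n, ι, π, hιπ⟩ := h
  intro f
  have h1 : f ≫ S.functor.map ι = 0 := by
    have htot : S.functor.map (∑ j : Fin n, biproduct.π (fun _ : Fin n => X) j ≫
        biproduct.ι (fun _ : Fin n => X) j) = 𝟙 _ := by
      rw [biproduct.total, S.functor.map_id]
    calc f ≫ S.functor.map ι = (f ≫ S.functor.map ι) ≫ S.functor.map
          (∑ j : Fin n, biproduct.π (fun _ : Fin n => X) j ≫ biproduct.ι (fun _ : Fin n => X) j) := by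
            rw [htot, Category.comp_id]
      _ = ∑ j : Fin n, (f ≫ S.functor.map (ι ≫ biproduct.π (fun _ : Fin n => X) j)) ≫
            S.functor.map (biproduct.ι (fun _ : Fin n => X) j) := by
          rw [Functor.map_sum, Preadditive.comp_sum]
          apply Finset.sum_congr rfl
          intro j _
          simp [Functor.map_comp]
      _ = 0 := by
          apply Finset.sum_eq_zero
          intro j _
          rw [hr (f ≫ S.functor.map (ι ≫ biproduct.π (fun _ : Fin n => X) j)), zero_comp]
  calc f = f ≫ S.functor.map (ι ≫ π) := by rw [hιπ, S.functor.map_id, Category.comp_id]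
    _ = (f ≫ S.functor.map ι) ≫ S.functor.map π := by rw [Functor.map_comp, Category.assoc]
    _ = 0 := by rw [h1, zero_comp]

lemma aux_extVanish_src (S : 𝒯 ≌ 𝒯) {X Y Z : 𝒯}
    (hv : extVanish S X Y) (h : inAdd X Z) : extVanish S Z Y := by
  obtain ⟨n, ι, π, hιπ⟩ := h
  intro g
  have h0 : π ≫ g = 0 := by
    apply biproduct.hom_ext'
    intro j
    rw [comp_zero, ← Category.assoc]
    exact hv _
  calc g = ι ≫ π ≫ g := by rw [← Category.assoc, hιπ, Category.id_comp]
    _ = 0 := by rw [h0, comp_zero]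

lemma aux_inAdd_retract {X Y Z : 𝒯} (h : inAdd X Z)
    (i : Y ⟶ Z) (p : Z ⟶ Y) (hip : i ≫ p = 𝟙 Y) : inAdd X Y := by
  obtain ⟨n, ι, π, hιπ⟩ := h
  exact ⟨n, i ≫ ι, π ≫ p, by rw [Category.assoc, ← Category.assoc ι, hιπ, Category.id_comp, hip]⟩

end Aux

open MaxTauRigid CategoryTheory Limits in
/-- first implication of Theorem A / Theorem 1.1(i):
in the setting of the paper, if `X` is an Oppermann–Thomas cluster tilting object of `𝒯`,
then `X` is `d`-self-perpendicular, i.e. `add X = { Y ∈ 𝒯 | Ext^d_𝒯(X,Y) = 0 }`. -/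
theorem statement0
    (k : Type v) [Field k] [IsAlgClosed k]
    (𝒯 : Type u) [Category.{v} 𝒯] [Preadditive 𝒯] [CategoryTheory.Linear k 𝒯]
    [HasFiniteBiproducts 𝒯] [IsIdempotentComplete 𝒯]
    [homFinite : ∀ X Y : 𝒯, FiniteDimensional k (X ⟶ Y)]
    (d : ℕ) (hd : 1 ≤ d)
    (S : 𝒯 ≌ 𝒯) [S.functor.Additive] [S.functor.Linear k]
    (ang : Angulation 𝒯 S d) (cy : CalabiYau 𝒯 k S)
    (X : 𝒯) (hX : IsClusterTilting ang X) :
    IsSelfPerp S X := by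
  intro Y
  constructor
  · intro h
    exact aux_extVanish_of_inAdd S hX.1 h
  · intro hv
    obtain ⟨A, hA, ⟨e⟩, hadd⟩ := hX.2 Y
    have hv0 : extVanish S (A.chain.obj' 0) Y := aux_extVanish_src S hv (hadd 0 (by omega))
    have hzero : ∀ g : S.functor.obj (A.chain.obj' 0) ⟶
        S.functor.obj (S.functor.obj (A.chain.obj' (d + 1))), g = 0 := by
      intro g
      obtain ⟨g', rfl⟩ := S.functor.map_surjective g
      have hg' : g' ≫ S.functor.map e.hom = 0 := hv0 _
      have : g' = 0 := by
        rw [← cancel_mono (S.functor.map e.hom), hg', zero_comp]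
      rw [this, Functor.map_zero]
    have hwrap0 : A.wrap = 0 := by
      apply (cy.equiv _ _).injective
      rw [map_zero]
      ext g
      rw [hzero g, map_zero]
      rfl
    obtain ⟨h, hh⟩ := ang.exact_last A hA _ (𝟙 _) (by rw [Category.id_comp, hwrap0])
    have hret : inAdd X (A.chain.obj' (d + 1)) :=
      aux_inAdd_retract (hadd d le_rfl) h _ hh
    exact aux_inAdd_retract hret e.inv e.hom (by simp)
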